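/- Let μ > 0, F ∈ ℝ³, and 0 < a < b. Let u_δ(x) = (1/(8πμ))·(F/|x| + ((x·F)/|x|³)·x) and p_δ(x) = (1/(4π))·(x·F)/|x|³ be the 3D Stokeslet, and let χ̃(x) = χ(|x|) with χ(r) = (2r³ − 3(a+b)r² + 6abr + b²(b−3a))/(b−a)³ for a ≤ r ≤ b. Then for every x ∈ ℝ³ with a < |x| < b, writing r = |x|: −μ·Δ(χ̃·u_δ)(x) + ∇(χ̃·p_δ)(x) = [3 / (4π(b−a)³ r²)] · ( [ (a+b)r − 2r² ]·F + [ 2ab − (a+b)r ]·((x·F)/r²)·x ). -/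

import Mathlib

set_option maxHeartbeats 1000000


open Real MeasureTheory

noncomputable section

/-- Euclidean inner product on `Fin d → ℝ`. -/
def dot {d : ℕ} (x y : Fin d → ℝ) : ℝ := ∑ i, x i * y i

/-- Euclidean norm on `Fin d → ℝ`. -/
def eunorm {d : ℕ} (x : Fin d → ℝ) : ℝ := Real.sqrt (∑ i, (x i) ^ 2)

/-- `i`-th partial derivative of a scalar field. -/
def pd {d : ℕ} (i : Fin d) (f : (Fin d → ℝ) → ℝ) (x : Fin d → ℝ) : ℝ :=
  fderiv ℝ f x (Pi.single i 1)

/-- Laplacian (sum of second partial derivatives) of a scalar field. -/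
def lap {d : ℕ} (f : (Fin d → ℝ) → ℝ) (x : Fin d → ℝ) : ℝ :=
  ∑ i, pd i (fun y => pd i f y) x

/-- Divergence of a vector field. -/
def divg {d : ℕ} (u : (Fin d → ℝ) → (Fin d → ℝ)) (x : Fin d → ℝ) : ℝ :=
  ∑ i, pd i (fun y => u y i) x

/-- 3D Stokeslet velocity. -/
def udelta3 (μ : ℝ) (F : Fin 3 → ℝ) (x : Fin 3 → ℝ) : Fin 3 → ℝ :=
  fun j => (1 / (8 * π * μ)) *
    (F j / eunorm x + (dot x F / (eunorm x) ^ 3) * x j)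

/-- 3D Stokeslet pressure. -/
def pdelta3 (F : Fin 3 → ℝ) (x : Fin 3 → ℝ) : ℝ :=
  (1 / (4 * π)) * (dot x F / (eunorm x) ^ 3)

/-- The radial cubic cutoff profile: `1` for `r ≤ a`, a cubic polynomial on `[a, b]`,
and `0` for `r ≥ b`. -/
def cutoff (a b r : ℝ) : ℝ :=
  if r ≤ a then 1
  else if r ≤ b then
    (2 * r ^ 3 - 3 * (a + b) * r ^ 2 + 6 * a * b * r + b ^ 2 * (b - 3 * a)) / (b - a) ^ 3
  else 0

namespace TSAux

def dotCLM (w : Fin 3 → ℝ) : (Fin 3 → ℝ) →L[ℝ] ℝ :=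
  ∑ i, w i • (ContinuousLinearMap.proj i : (Fin 3 → ℝ) →L[ℝ] ℝ)

lemma dotCLM_apply (w v : Fin 3 → ℝ) : dotCLM w v = ∑ i, w i * v i := by
  simp [dotCLM]

lemma dotCLM_single (w : Fin 3 → ℝ) (i : Fin 3) : dotCLM w (Pi.single i (1:ℝ)) = w i := by
  rw [dotCLM_apply]
  simp [Pi.single_apply]

lemma eunorm_sq (x : Fin 3 → ℝ) : eunorm x ^ 2 = ∑ i, x i ^ 2 :=
  Real.sq_sqrt (Finset.sum_nonneg fun i _ => sq_nonneg _)

lemma hasFDerivAt_apply (i : Fin 3) (x : Fin 3 → ℝ) :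
    HasFDerivAt (fun y : Fin 3 → ℝ => y i)
      (ContinuousLinearMap.proj i : (Fin 3 → ℝ) →L[ℝ] ℝ) x := by
  have h := (ContinuousLinearMap.proj i : (Fin 3 → ℝ) →L[ℝ] ℝ).hasFDerivAt (x := x)
  exact h

lemma hasFDerivAt_eunorm {x : Fin 3 → ℝ} (hx : 0 < eunorm x) :
    HasFDerivAt eunorm ((eunorm x)⁻¹ • dotCLM x) x := by
  have hs : HasFDerivAt (fun y : Fin 3 → ℝ => ∑ i, y i ^ 2) ((2:ℝ) • dotCLM x) x := by
    have h : ∀ i ∈ Finset.univ, HasFDerivAt (fun y : Fin 3 → ℝ => y i ^ 2)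
        (((2:ℝ) * x i) • (ContinuousLinearMap.proj i : (Fin 3 → ℝ) →L[ℝ] ℝ)) x := by
      intro i _
      have hmul := (hasFDerivAt_apply i x).mul (hasFDerivAt_apply i x)
      have hfun : (fun y : Fin 3 → ℝ => y i ^ 2) = fun y => y i * y i := by
        funext y; ring
      have hlin : ((2:ℝ) * x i) • (ContinuousLinearMap.proj i : (Fin 3 → ℝ) →L[ℝ] ℝ)
          = x i • (ContinuousLinearMap.proj i : (Fin 3 → ℝ) →L[ℝ] ℝ)
            + x i • (ContinuousLinearMap.proj i : (Fin 3 → ℝ) →L[ℝ] ℝ) := by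
        rw [two_mul, add_smul]
      rw [hfun, hlin]
      exact hmul
    have hsum := HasFDerivAt.fun_sum h
    refine hsum.congr_fderiv (Eq.symm ?_)
    ext v
    rw [ContinuousLinearMap.smul_apply, dotCLM_apply, ContinuousLinearMap.sum_apply,
      Finset.smul_sum]
    refine Finset.sum_congr rfl fun i _ => ?_
    simp
    ring
  have h0 : (0:ℝ) < ∑ i, x i ^ 2 := by
    have := eunorm_sq x ▸ pow_pos hx 2
    exact this
  have hsq := (Real.hasDerivAt_sqrt h0.ne').comp_hasFDerivAt x hs
  have heq : (1 / (2 * Real.sqrt (∑ i, x i ^ 2))) • ((2:ℝ) • dotCLM x)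
      = (eunorm x)⁻¹ • dotCLM x := by
    rw [smul_smul]
    congr 1
    have : Real.sqrt (∑ i, x i ^ 2) = eunorm x := rfl
    rw [this]
    field_simp
  exact heq ▸ hsq

lemma hasFDerivAt_eunorm_zpow {x : Fin 3 → ℝ} (hx : 0 < eunorm x) (k : ℤ) (c : ℝ) (m : ℤ)
    (hc : (k : ℝ) = c) (hm : k - 2 = m) :
    HasFDerivAt (fun y : Fin 3 → ℝ => eunorm y ^ k)
      ((c * eunorm x ^ m) • dotCLM x) x := by
  have h := (hasDerivAt_zpow k (eunorm x) (Or.inl hx.ne')).comp_hasFDerivAt x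
    (hasFDerivAt_eunorm hx)
  have e : eunorm x ^ (k - 1) * (eunorm x)⁻¹ = eunorm x ^ m := by
    rw [← zpow_sub_one₀ hx.ne']
    congr 1
    omega
  have heq : ((k:ℝ) * eunorm x ^ (k - 1)) • ((eunorm x)⁻¹ • dotCLM x)
      = (c * eunorm x ^ m) • dotCLM x := by
    rw [smul_smul, mul_assoc, e, hc]
  exact heq ▸ h

lemma hasFDerivAt_dotF (F : Fin 3 → ℝ) (x : Fin 3 → ℝ) :
    HasFDerivAt (fun y : Fin 3 → ℝ => dot y F) (dotCLM F) x := by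
  have h : (fun y : Fin 3 → ℝ => dot y F) = fun y => dotCLM F y := by
    funext y
    rw [dotCLM_apply]
    exact Finset.sum_congr rfl fun i _ => mul_comm _ _
  rw [h]
  exact (dotCLM F).hasFDerivAt

def chiP (a b r : ℝ) : ℝ :=
  (2 * r ^ 3 - 3 * (a + b) * r ^ 2 + 6 * a * b * r + b ^ 2 * (b - 3 * a)) / (b - a) ^ 3

def chiP' (a b r : ℝ) : ℝ := (6 * r ^ 2 - 6 * (a + b) * r + 6 * a * b) / (b - a) ^ 3

def chiP'' (a b r : ℝ) : ℝ := (12 * r - 6 * (a + b)) / (b - a) ^ 3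

lemma hasDerivAt_chiP (a b r : ℝ) : HasDerivAt (fun s => chiP a b s) (chiP' a b r) r := by
  have h3 : HasDerivAt (fun s : ℝ => s ^ 3) (3 * r ^ 2) r := by
    simpa using hasDerivAt_pow 3 r
  have h2 : HasDerivAt (fun s : ℝ => s ^ 2) (2 * r) r := by
    simpa using hasDerivAt_pow 2 r
  have h1 : HasDerivAt (fun s : ℝ => s) 1 r := hasDerivAt_id r
  have h : HasDerivAt
      (fun s : ℝ => 2 * s ^ 3 - 3 * (a + b) * s ^ 2 + 6 * a * b * s + b ^ 2 * (b - 3 * a))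
      (2 * (3 * r ^ 2) - 3 * (a + b) * (2 * r) + 6 * a * b * 1) r := by
    exact (((h3.const_mul 2).sub (h2.const_mul (3 * (a + b)))).add
      (h1.const_mul (6 * a * b))).add_const (b ^ 2 * (b - 3 * a))
  have := h.div_const ((b - a) ^ 3)
  unfold chiP chiP'
  exact this.congr_deriv (by ring)

lemma hasDerivAt_chiP' (a b r : ℝ) : HasDerivAt (fun s => chiP' a b s) (chiP'' a b r) r := by
  have h2 : HasDerivAt (fun s : ℝ => s ^ 2) (2 * r) r := by
    simpa using hasDerivAt_pow 2 r
  have h1 : HasDerivAt (fun s : ℝ => s) 1 r := hasDerivAt_id r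
  have h : HasDerivAt (fun s : ℝ => 6 * s ^ 2 - 6 * (a + b) * s + 6 * a * b)
      (6 * (2 * r) - 6 * (a + b) * 1) r :=
    ((h2.const_mul 6).sub (h1.const_mul (6 * (a + b)))).add_const (6 * a * b)
  have := h.div_const ((b - a) ^ 3)
  unfold chiP' chiP''
  exact this.congr_deriv (by ring)

lemma hasFDerivAt_chi {x : Fin 3 → ℝ} (hx : 0 < eunorm x) (a b : ℝ) :
    HasFDerivAt (fun y : Fin 3 → ℝ => chiP a b (eunorm y))
      ((chiP' a b (eunorm x) * (eunorm x)⁻¹) • dotCLM x) x := by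
  have h := (hasDerivAt_chiP a b (eunorm x)).comp_hasFDerivAt x (hasFDerivAt_eunorm hx)
  simpa [smul_smul, Function.comp_def] using h

lemma hasFDerivAt_chi' {x : Fin 3 → ℝ} (hx : 0 < eunorm x) (a b : ℝ) :
    HasFDerivAt (fun y : Fin 3 → ℝ => chiP' a b (eunorm y))
      ((chiP'' a b (eunorm x) * (eunorm x)⁻¹) • dotCLM x) x := by
  have h := (hasDerivAt_chiP' a b (eunorm x)).comp_hasFDerivAt x (hasFDerivAt_eunorm hx)
  simpa [smul_smul, Function.comp_def] using h


lemma hasFDerivAt_inv_pow {x : Fin 3 → ℝ} (hx : 0 < eunorm x) (n : ℕ) (c : ℝ) (m : ℕ)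
    (hc : -(n:ℝ) = c) (hm : n + 2 = m) :
    HasFDerivAt (fun y : Fin 3 → ℝ => (eunorm y)⁻¹ ^ n)
      ((c * (eunorm x)⁻¹ ^ m) • dotCLM x) x := by
  have h := hasFDerivAt_eunorm_zpow hx (-(n:ℤ)) c (-(m:ℤ)) (by push_cast [← hc]; ring)
    (by omega)
  have hfun : (fun y : Fin 3 → ℝ => eunorm y ^ (-(n:ℤ))) =
      fun y : Fin 3 → ℝ => (eunorm y)⁻¹ ^ n := by
    funext y
    rw [zpow_neg, zpow_natCast, inv_pow]
  have hco : eunorm x ^ (-(m:ℤ)) = (eunorm x)⁻¹ ^ m := by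
    rw [zpow_neg, zpow_natCast, inv_pow]
  rw [hfun, hco] at h
  exact h

lemma hasFDerivAt_inv_eunorm {x : Fin 3 → ℝ} (hx : 0 < eunorm x) :
    HasFDerivAt (fun y : Fin 3 → ℝ => (eunorm y)⁻¹)
      ((-1 * (eunorm x)⁻¹ ^ 3) • dotCLM x) x := by
  have h := hasFDerivAt_inv_pow hx 1 (-1) 3 (by norm_num) (by norm_num)
  have hfun : (fun y : Fin 3 → ℝ => (eunorm y)⁻¹ ^ 1) =
      fun y : Fin 3 → ℝ => (eunorm y)⁻¹ := by
    funext y; rw [pow_one]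
  rw [hfun] at h
  exact h

def Gu (mu a b : ℝ) (F : Fin 3 → ℝ) (j : Fin 3) (y : Fin 3 → ℝ) : ℝ :=
  chiP a b (eunorm y) *
    (1 / (8 * π * mu) *
      (F j * (eunorm y)⁻¹ + dot y F * (eunorm y)⁻¹ ^ 3 * y j))

def Du (mu a b : ℝ) (F : Fin 3 → ℝ) (i j : Fin 3) (y : Fin 3 → ℝ) : ℝ :=
  chiP' a b (eunorm y) * (eunorm y)⁻¹ * y i *
    (1 / (8 * π * mu) *
      (F j * (eunorm y)⁻¹ + dot y F * (eunorm y)⁻¹ ^ 3 * y j))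
  + chiP a b (eunorm y) *
    (1 / (8 * π * mu) *
      (F j * (-1 * (eunorm y)⁻¹ ^ 3 * y i)
        + ((F i * (eunorm y)⁻¹ ^ 3 + dot y F * (-3 * (eunorm y)⁻¹ ^ 5 * y i)) * y j
            + dot y F * (eunorm y)⁻¹ ^ 3 * (if j = i then (1:ℝ) else 0))))

def Gp (a b : ℝ) (F : Fin 3 → ℝ) (y : Fin 3 → ℝ) : ℝ :=
  chiP a b (eunorm y) * (1 / (4 * π) * (dot y F * (eunorm y)⁻¹ ^ 3))

lemma pd_Gu {x : Fin 3 → ℝ} (hx : 0 < eunorm x) (mu a b : ℝ) (F : Fin 3 → ℝ) (i j : Fin 3) :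
    pd i (fun y => Gu mu a b F j y) x = Du mu a b F i j x := by
  have hm1 := hasFDerivAt_inv_eunorm hx
  have hm3 := hasFDerivAt_inv_pow hx 3 (-3) 5 (by norm_num) (by norm_num)
  have hd := hasFDerivAt_dotF F x
  have hj := hasFDerivAt_apply j x
  have hin := (hm1.const_mul (F j)).add ((hd.mul hm3).mul hj)
  have H := (hasFDerivAt_chi hx a b).mul (hin.const_mul (1 / (8 * π * mu)))
  have hfd : fderiv ℝ (fun y => Gu mu a b F j y) x =
      chiP a b (eunorm x) •
          (1 / (8 * π * mu)) •
            (F j • (-1 * (eunorm x)⁻¹ ^ 3) • dotCLM x +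
              ((dot x F * (eunorm x)⁻¹ ^ 3) • ContinuousLinearMap.proj j +
                x j • (dot x F • (-3 * (eunorm x)⁻¹ ^ 5) • dotCLM x
                  + (eunorm x)⁻¹ ^ 3 • dotCLM F))) +
        (1 / (8 * π * mu) * (F j * (eunorm x)⁻¹ + dot x F * (eunorm x)⁻¹ ^ 3 * x j)) •
          (chiP' a b (eunorm x) * (eunorm x)⁻¹) • dotCLM x := H.fderiv
  unfold pd
  rw [hfd]
  simp only [ContinuousLinearMap.add_apply, ContinuousLinearMap.smul_apply,
    ContinuousLinearMap.proj_apply, dotCLM_single, smul_eq_mul, Pi.single_apply,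
    eq_self_iff_true, if_true]
  unfold Du
  ring

lemma pd_Gp {x : Fin 3 → ℝ} (hx : 0 < eunorm x) (a b : ℝ) (F : Fin 3 → ℝ) (j : Fin 3) :
    pd j (fun y => Gp a b F y) x =
      chiP' a b (eunorm x) * (eunorm x)⁻¹ * x j *
          (1 / (4 * π) * (dot x F * (eunorm x)⁻¹ ^ 3))
        + chiP a b (eunorm x) *
          (1 / (4 * π) * (F j * (eunorm x)⁻¹ ^ 3
            + dot x F * (-3 * (eunorm x)⁻¹ ^ 5 * x j))) := by
  have hm3 := hasFDerivAt_inv_pow hx 3 (-3) 5 (by norm_num) (by norm_num)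
  have hd := hasFDerivAt_dotF F x
  have H := (hasFDerivAt_chi hx a b).mul ((hd.mul hm3).const_mul (1 / (4 * π)))
  have hfd : fderiv ℝ (fun y => Gp a b F y) x =
      chiP a b (eunorm x) • (1 / (4 * π)) •
          (dot x F • (-3 * (eunorm x)⁻¹ ^ 5) • dotCLM x + (eunorm x)⁻¹ ^ 3 • dotCLM F) +
        (1 / (4 * π) * (dot x F * (eunorm x)⁻¹ ^ 3)) •
          (chiP' a b (eunorm x) * (eunorm x)⁻¹) • dotCLM x := H.fderiv
  unfold pd
  rw [hfd]
  simp only [ContinuousLinearMap.add_apply, ContinuousLinearMap.smul_apply,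
    ContinuousLinearMap.proj_apply, dotCLM_single, smul_eq_mul, Pi.single_apply,
    eq_self_iff_true, if_true]
  ring

lemma pd_Du {x : Fin 3 → ℝ} (hx : 0 < eunorm x) (mu a b : ℝ) (F : Fin 3 → ℝ) (i j : Fin 3) :
    pd i (fun y => Du mu a b F i j y) x =
      1 / (8 * π * mu) *
          (chiP' a b (eunorm x) *
              (F j * (eunorm x)⁻¹ ^ 2 + dot x F * x j * (eunorm x)⁻¹ ^ 4)
            + chiP a b (eunorm x) *
              (-(F j) * (eunorm x)⁻¹ ^ 3 - 3 * dot x F * x j * (eunorm x)⁻¹ ^ 5))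
      + 1 / (8 * π * mu) *
          ((chiP'' a b (eunorm x) * (eunorm x)⁻¹ ^ 2
              - chiP' a b (eunorm x) * (eunorm x)⁻¹ ^ 3) *
              (F j * (eunorm x)⁻¹ + dot x F * x j * (eunorm x)⁻¹ ^ 3)
            + 2 * chiP' a b (eunorm x) * (eunorm x)⁻¹ *
              (-(F j) * (eunorm x)⁻¹ ^ 3 - 3 * dot x F * x j * (eunorm x)⁻¹ ^ 5)
            + chiP a b (eunorm x) *
              (3 * F j * (eunorm x)⁻¹ ^ 5 + 15 * dot x F * x j * (eunorm x)⁻¹ ^ 7)) *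
          x i ^ 2
      + 1 / (8 * π * mu) *
          (2 * chiP' a b (eunorm x) * x j * (eunorm x)⁻¹ ^ 4
            - 6 * chiP a b (eunorm x) * x j * (eunorm x)⁻¹ ^ 5) *
          (x i * F i)
      + (if j = i then (1:ℝ) else 0) *
          (1 / (8 * π * mu) *
              (2 * chiP' a b (eunorm x) * dot x F * (eunorm x)⁻¹ ^ 4
                - 6 * chiP a b (eunorm x) * dot x F * (eunorm x)⁻¹ ^ 5) * x i
            + 1 / (8 * π * mu) * (2 * chiP a b (eunorm x) * (eunorm x)⁻¹ ^ 3) * F i) := by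
  have hm1 := hasFDerivAt_inv_eunorm hx
  have hm3 := hasFDerivAt_inv_pow hx 3 (-3) 5 (by norm_num) (by norm_num)
  have hm5 := hasFDerivAt_inv_pow hx 5 (-5) 7 (by norm_num) (by norm_num)
  have hd := hasFDerivAt_dotF F x
  have hi := hasFDerivAt_apply i x
  have hj := hasFDerivAt_apply j x
  have hin := (hm1.const_mul (F j)).add ((hd.mul hm3).mul hj)
  have hT1 := (((hasFDerivAt_chi' hx a b).mul hm1).mul hi).mul
    (hin.const_mul (1 / (8 * π * mu)))
  have h2a := ((hm3.const_mul (-1)).mul hi).const_mul (F j)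
  have h2b := ((hm3.const_mul (F i)).add (hd.mul ((hm5.const_mul (-3)).mul hi))).mul hj
  have h2c := (hd.mul hm3).mul_const (if j = i then (1:ℝ) else 0)
  have hT2 := (hasFDerivAt_chi hx a b).mul
    ((h2a.add (h2b.add h2c)).const_mul (1 / (8 * π * mu)))
  have H := hT1.add hT2
  have hfd : fderiv ℝ (fun y => Du mu a b F i j y) x =
      (chiP' a b (eunorm x) * (eunorm x)⁻¹ * x i) •
            (1 / (8 * π * mu)) •
              (F j • (-1 * (eunorm x)⁻¹ ^ 3) • dotCLM x +
                ((dot x F * (eunorm x)⁻¹ ^ 3) • ContinuousLinearMap.proj j +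
                  x j • (dot x F • (-3 * (eunorm x)⁻¹ ^ 5) • dotCLM x
                    + (eunorm x)⁻¹ ^ 3 • dotCLM F))) +
          (1 / (8 * π * mu) * (F j * (eunorm x)⁻¹ + dot x F * (eunorm x)⁻¹ ^ 3 * x j)) •
            ((chiP' a b (eunorm x) * (eunorm x)⁻¹) • ContinuousLinearMap.proj i +
              x i •
                (chiP' a b (eunorm x) • (-1 * (eunorm x)⁻¹ ^ 3) • dotCLM x +
                  (eunorm x)⁻¹ • (chiP'' a b (eunorm x) * (eunorm x)⁻¹) • dotCLM x)) +
        (chiP a b (eunorm x) •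
            (1 / (8 * π * mu)) •
              (F j •
                  ((-1 * (eunorm x)⁻¹ ^ 3) • ContinuousLinearMap.proj i
                    + x i • (-1:ℝ) • (-3 * (eunorm x)⁻¹ ^ 5) • dotCLM x) +
                ((F i * (eunorm x)⁻¹ ^ 3 + dot x F * (-3 * (eunorm x)⁻¹ ^ 5 * x i)) •
                      ContinuousLinearMap.proj j +
                    x j •
                      (F i • (-3 * (eunorm x)⁻¹ ^ 5) • dotCLM x +
                        (dot x F •
                            ((-3 * (eunorm x)⁻¹ ^ 5) • ContinuousLinearMap.proj i +
                              x i • (-3:ℝ) • (-5 * (eunorm x)⁻¹ ^ 7) • dotCLM x) +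
                          (-3 * (eunorm x)⁻¹ ^ 5 * x i) • dotCLM F)) +
                  (if j = i then (1:ℝ) else 0) •
                    (dot x F • (-3 * (eunorm x)⁻¹ ^ 5) • dotCLM x
                      + (eunorm x)⁻¹ ^ 3 • dotCLM F))) +
          (1 / (8 * π * mu) *
              (F j * (-1 * (eunorm x)⁻¹ ^ 3 * x i) +
                ((F i * (eunorm x)⁻¹ ^ 3 + dot x F * (-3 * (eunorm x)⁻¹ ^ 5 * x i)) * x j +
                  dot x F * (eunorm x)⁻¹ ^ 3 * if j = i then (1:ℝ) else 0))) •
            (chiP' a b (eunorm x) * (eunorm x)⁻¹) • dotCLM x) := H.fderiv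
  unfold pd
  rw [hfd]
  simp only [ContinuousLinearMap.add_apply, ContinuousLinearMap.smul_apply,
    ContinuousLinearMap.proj_apply, dotCLM_single, smul_eq_mul, Pi.single_apply,
    eq_self_iff_true, if_true]
  ring

lemma sum3 (A B C E1 E2 : ℝ) (x F : Fin 3 → ℝ) (j : Fin 3) :
    (∑ i : Fin 3, (A + B * x i ^ 2 + C * (x i * F i)
      + (if j = i then (1:ℝ) else 0) * (E1 * x i + E2 * F i)))
    = 3 * A + B * (∑ i, x i ^ 2) + C * (∑ i, x i * F i) + (E1 * x j + E2 * F j) := by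
  fin_cases j <;> simp [Fin.sum_univ_three] <;> ring

end TSAux

/-- The Stokes operator applied to the truncated 3D Stokeslet `(χ̃ u_δ, χ̃ p_δ)` on the
annulus `a < |x| < b` gives the explicit function `g`. -/
theorem stokes_truncated_stokeslet3d (μ : ℝ) (hμ : 0 < μ) (F : Fin 3 → ℝ)
    (a b : ℝ) (ha : 0 < a) (hab : a < b)
    (x : Fin 3 → ℝ) (hxa : a < eunorm x) (hxb : eunorm x < b) :
    ∀ j : Fin 3,
      -μ * lap (fun y => cutoff a b (eunorm y) * udelta3 μ F y j) x +
        pd j (fun y => cutoff a b (eunorm y) * pdelta3 F y) x =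
      (3 / (4 * π * (b - a) ^ 3 * (eunorm x) ^ 2)) *
        (((a + b) * eunorm x - 2 * (eunorm x) ^ 2) * F j
          + (2 * a * b - (a + b) * eunorm x) * (dot x F / (eunorm x) ^ 2) * x j) := by

  intro j
  have hr : 0 < eunorm x := ha.trans hxa
  have hne : eunorm x ≠ 0 := hr.ne'
  have hcont : Continuous fun y : Fin 3 → ℝ => eunorm y := by
    have h1 : Continuous fun y : Fin 3 → ℝ => ∑ i, y i ^ 2 := by continuity
    exact Real.continuous_sqrt.comp h1
  have hUopen : IsOpen {y : Fin 3 → ℝ | a < eunorm y ∧ eunorm y < b} := by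
    have he : {y : Fin 3 → ℝ | a < eunorm y ∧ eunorm y < b}
        = (fun y : Fin 3 → ℝ => eunorm y) ⁻¹' Set.Ioo a b := rfl
    rw [he]
    exact isOpen_Ioo.preimage hcont
  have hxU : x ∈ {y : Fin 3 → ℝ | a < eunorm y ∧ eunorm y < b} := ⟨hxa, hxb⟩
  have hGu : ∀ y ∈ {y : Fin 3 → ℝ | a < eunorm y ∧ eunorm y < b},
      cutoff a b (eunorm y) * udelta3 μ F y j = TSAux.Gu μ a b F j y := by
    intro y hy
    have h1 : ¬ eunorm y ≤ a := not_le.mpr hy.1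
    have h2 : eunorm y ≤ b := hy.2.le
    unfold cutoff udelta3 TSAux.Gu TSAux.chiP
    rw [if_neg h1, if_pos h2]
    simp only [div_eq_mul_inv, inv_pow]
  have hGp : ∀ y ∈ {y : Fin 3 → ℝ | a < eunorm y ∧ eunorm y < b},
      cutoff a b (eunorm y) * pdelta3 F y = TSAux.Gp a b F y := by
    intro y hy
    have h1 : ¬ eunorm y ≤ a := not_le.mpr hy.1
    have h2 : eunorm y ≤ b := hy.2.le
    unfold cutoff pdelta3 TSAux.Gp TSAux.chiP
    rw [if_neg h1, if_pos h2]
    simp only [div_eq_mul_inv, inv_pow]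
  have hlap : lap (fun y => cutoff a b (eunorm y) * udelta3 μ F y j) x
      = ∑ i, pd i (fun y => TSAux.Du μ a b F i j y) x := by
    unfold lap
    refine Finset.sum_congr rfl fun i _ => ?_
    have hDeq : (fun y => fderiv ℝ (fun z => cutoff a b (eunorm z) * udelta3 μ F z j) y
          (Pi.single i 1))
        =ᶠ[nhds x] fun y => TSAux.Du μ a b F i j y := by
      filter_upwards [hUopen.mem_nhds hxU] with y hy
      show pd i (fun z => cutoff a b (eunorm z) * udelta3 μ F z j) y
        = TSAux.Du μ a b F i j y
      have h0 : 0 < eunorm y := ha.trans hy.1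
      have hfg : (fun z => cutoff a b (eunorm z) * udelta3 μ F z j)
          =ᶠ[nhds y] fun z => TSAux.Gu μ a b F j z := by
        filter_upwards [hUopen.mem_nhds hy] with z hz using hGu z hz
      have hstep : pd i (fun z => cutoff a b (eunorm z) * udelta3 μ F z j) y
          = pd i (fun z => TSAux.Gu μ a b F j z) y := by
        unfold pd
        rw [hfg.fderiv_eq]
      rw [hstep, TSAux.pd_Gu h0 μ a b F i j]
    unfold pd
    rw [hDeq.fderiv_eq]
  have hpres : pd j (fun y => cutoff a b (eunorm y) * pdelta3 F y) x
      = pd j (fun y => TSAux.Gp a b F y) x := by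
    have hfg : (fun z => cutoff a b (eunorm z) * pdelta3 F z)
        =ᶠ[nhds x] fun z => TSAux.Gp a b F z := by
      filter_upwards [hUopen.mem_nhds hxU] with z hz using hGp z hz
    unfold pd
    rw [hfg.fderiv_eq]
  rw [hlap, hpres, TSAux.pd_Gp hr a b F j]
  rw [Finset.sum_congr rfl fun i _ => TSAux.pd_Du hr μ a b F i j]
  rw [TSAux.sum3]
  rw [← TSAux.eunorm_sq]
  have hdot : ∑ i, x i * F i = dot x F := rfl
  rw [hdot]
  have hba : b - a ≠ 0 := sub_ne_zero.mpr hab.ne'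
  unfold TSAux.chiP TSAux.chiP' TSAux.chiP''
  field_simp [hne, hba, Real.pi_ne_zero, hμ.ne']
  ring
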